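/- If X and Y are orthogonal k-dimensional subspaces of a complex Hilbert space and X = X_0, X_1, …, X_k = Y is a geodesic in the Grassmann graph Γ_k(H), then every X_j is the orthogonal direct sum of X ∩ X_j and Y ∩ X_j; consequently every X_j is compatible with both X and Y. -/

import Mathlib

/-- The Grassmann graph on the `k`-dimensional subspaces of `H`: two distinct
`k`-dimensional subspaces are adjacent iff their intersection has dimension `k-1`. -/
def GrassmannGraph (H : Type*) [NormedAddCommGroup H] [InnerProductSpace ℂ H] (k : ℕ) :
    SimpleGraph {X : Submodule ℂ H // Module.finrank ℂ ↥X = k} where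
  Adj X Y := Module.finrank ℂ ↥(X.1 ⊓ Y.1) = k - 1 ∧ X ≠ Y
  symm := by
    constructor
    intro X Y h
    refine ⟨?_, h.2.symm⟩
    rw [inf_comm]
    exact h.1
  loopless := ⟨fun X h => h.2 rfl⟩

def Compatible {H : Type*} [NormedAddCommGroup H] [InnerProductSpace ℂ H]
    (X Y : Submodule ℂ H) : Prop :=
  ∃ X' Y' Z : Submodule ℂ H, X' ⟂ Y' ∧ X' ⟂ Z ∧ Y' ⟂ Z ∧ X = X' ⊔ Z ∧ Y = Y' ⊔ Z

lemma grass_findim {H : Type*} [NormedAddCommGroup H] [InnerProductSpace ℂ H] {k : ℕ}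
    (hk : 0 < k) (A : {X : Submodule ℂ H // Module.finrank ℂ ↥X = k}) :
    FiniteDimensional ℂ A.1 :=
  FiniteDimensional.of_finrank_pos (by rw [A.2]; exact hk)

lemma grass_step {H : Type*} [NormedAddCommGroup H] [InnerProductSpace ℂ H] {k : ℕ}
    (hk : 0 < k) {A B : {X : Submodule ℂ H // Module.finrank ℂ ↥X = k}}
    (h : (GrassmannGraph H k).Adj A B) (W : Submodule ℂ H) :
    Module.finrank ℂ ↥(W ⊓ A.1) ≤ Module.finrank ℂ ↥(W ⊓ B.1) + 1 := by
  haveI := grass_findim hk A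
  haveI := grass_findim hk B
  haveI : FiniteDimensional ℂ ↥(W ⊓ A.1) := Submodule.finiteDimensional_of_le inf_le_right
  haveI : FiniteDimensional ℂ ↥(W ⊓ B.1) := Submodule.finiteDimensional_of_le inf_le_right
  haveI : FiniteDimensional ℂ ↥(A.1 ⊓ B.1) := Submodule.finiteDimensional_of_le inf_le_left
  have key := Submodule.finrank_sup_add_finrank_inf_eq (W ⊓ A.1) (A.1 ⊓ B.1)
  have h1 : Module.finrank ℂ ↥((W ⊓ A.1) ⊔ (A.1 ⊓ B.1)) ≤ k := by
    have hle : (W ⊓ A.1) ⊔ (A.1 ⊓ B.1) ≤ A.1 := sup_le inf_le_right inf_le_left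
    calc Module.finrank ℂ ↥((W ⊓ A.1) ⊔ (A.1 ⊓ B.1)) ≤ Module.finrank ℂ A.1 :=
          Submodule.finrank_mono hle
      _ = k := A.2
  have h2 : Module.finrank ℂ ↥((W ⊓ A.1) ⊓ (A.1 ⊓ B.1)) ≤ Module.finrank ℂ ↥(W ⊓ B.1) := by
    refine Submodule.finrank_mono ?_
    refine le_inf (inf_le_left.trans inf_le_left) (inf_le_right.trans inf_le_right)
  have h3 := (show Module.finrank ℂ ↥(A.1 ⊓ B.1) = k - 1 ∧ A ≠ B from h).1
  omega

lemma grass_walk {H : Type*} [NormedAddCommGroup H] [InnerProductSpace ℂ H] {k : ℕ}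
    (hk : 0 < k) {A B : {X : Submodule ℂ H // Module.finrank ℂ ↥X = k}}
    (p : (GrassmannGraph H k).Walk A B) (W : Submodule ℂ H) (j : ℕ) :
    Module.finrank ℂ ↥(W ⊓ A.1) ≤ Module.finrank ℂ ↥(W ⊓ (p.getVert j).1) + j := by
  induction p generalizing j with
  | nil => exact Nat.le_add_right _ _
  | @cons u v w h q ih =>
    cases j with
    | zero => rw [SimpleGraph.Walk.getVert_zero]; exact Nat.le_add_right _ _
    | succ j =>
      rw [SimpleGraph.Walk.getVert_cons_succ]
      calc Module.finrank ℂ ↥(W ⊓ u.1) ≤ Module.finrank ℂ ↥(W ⊓ v.1) + 1 :=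
            grass_step hk h W
        _ ≤ Module.finrank ℂ ↥(W ⊓ (q.getVert j).1) + j + 1 := by
            have := ih j; omega
        _ = Module.finrank ℂ ↥(W ⊓ (q.getVert j).1) + (j + 1) := by omega

theorem stmt_12 {H : Type*} [NormedAddCommGroup H] [InnerProductSpace ℂ H] {k : ℕ}
    (X Y : {X : Submodule ℂ H // Module.finrank ℂ ↥X = k})
    (hXY : X.1 ⟂ Y.1)
    (p : (GrassmannGraph H k).Walk X Y) (hp : p.length = k) :
    ∀ j ≤ k,
      (X.1 ⊓ (p.getVert j).1) ⟂ (Y.1 ⊓ (p.getVert j).1) ∧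
      (X.1 ⊓ (p.getVert j).1) ⊔ (Y.1 ⊓ (p.getVert j).1) = (p.getVert j).1 ∧
      Compatible (p.getVert j).1 X.1 ∧ Compatible (p.getVert j).1 Y.1 := by
  intro j hj
  set Xj := (p.getVert j).1 with hXj
  have hortho : (X.1 ⊓ Xj) ⟂ (Y.1 ⊓ Xj) := hXY.mono inf_le_left inf_le_left
  rcases Nat.eq_zero_or_pos k with hk | hk
  · -- k = 0 case
    subst hk
    have hj0 : j = 0 := Nat.le_zero.mp hj
    subst hj0
    have hXeqY : X = Y := SimpleGraph.Walk.eq_of_length_eq_zero hp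
    have hXbot : X.1 = ⊥ := by
      have hle : X.1 ≤ X.1ᗮ := by
        have := hXY
        rw [← hXeqY] at this
        exact Submodule.isOrtho_iff_le.mp this
      exact (Submodule.orthogonal_disjoint X.1).eq_bot_of_le hle
    have hYbot : Y.1 = ⊥ := by rw [← hXeqY]; exact hXbot
    have hXj0 : Xj = ⊥ := by
      rw [hXj, SimpleGraph.Walk.getVert_zero, hXbot]
    refine ⟨hortho, ?_, ?_, ?_⟩
    · rw [hXbot, hYbot, hXj0]; simp
    · exact ⟨⊥, ⊥, ⊥, Submodule.isOrtho_bot_left, Submodule.isOrtho_bot_left,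
        Submodule.isOrtho_bot_left, by rw [hXj0]; simp, by rw [hXbot]; simp⟩
    · exact ⟨⊥, ⊥, ⊥, Submodule.isOrtho_bot_left, Submodule.isOrtho_bot_left,
        Submodule.isOrtho_bot_left, by rw [hXj0]; simp, by rw [hYbot]; simp⟩
  · -- k > 0 case
    haveI := grass_findim hk X
    haveI := grass_findim hk Y
    haveI := grass_findim hk (p.getVert j)
    haveI : FiniteDimensional ℂ ↥(X.1 ⊓ Xj) := Submodule.finiteDimensional_of_le inf_le_left
    haveI : FiniteDimensional ℂ ↥(Y.1 ⊓ Xj) := Submodule.finiteDimensional_of_le inf_le_left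
    -- dimension bounds
    have h1 : k ≤ Module.finrank ℂ ↥(X.1 ⊓ Xj) + j := by
      have := grass_walk hk p X.1 j
      rwa [inf_idem, X.2] at this
    have h2 : k ≤ Module.finrank ℂ ↥(Y.1 ⊓ Xj) + (k - j) := by
      have := grass_walk hk p.reverse Y.1 (k - j)
      rw [inf_idem, Y.2, SimpleGraph.Walk.getVert_reverse, hp] at this
      have hkj : k - (k - j) = j := by omega
      rwa [hkj] at this
    have hsup : (X.1 ⊓ Xj) ⊔ (Y.1 ⊓ Xj) = Xj := by
      refine Submodule.eq_of_le_of_finrank_le (sup_le inf_le_right inf_le_right) ?_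
      have key := Submodule.finrank_sup_add_finrank_inf_eq (X.1 ⊓ Xj) (Y.1 ⊓ Xj)
      have hdisj : (X.1 ⊓ Xj) ⊓ (Y.1 ⊓ Xj) = ⊥ := disjoint_iff.mp hortho.disjoint
      rw [hdisj, finrank_bot] at key
      have hfj : Module.finrank ℂ Xj = k := (p.getVert j).2
      omega
    refine ⟨hortho, hsup, ?_, ?_⟩
    · -- Compatible Xj X
      refine ⟨Y.1 ⊓ Xj, (X.1 ⊓ Xj)ᗮ ⊓ X.1, X.1 ⊓ Xj, ?_, ?_, ?_, ?_, ?_⟩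
      · exact hXY.symm.mono inf_le_left inf_le_right
      · exact hXY.symm.mono inf_le_left inf_le_left
      · exact Submodule.isOrtho_iff_le.mpr inf_le_left
      · rw [sup_comm]; exact hsup.symm
      · rw [sup_comm]
        exact (Submodule.sup_orthogonal_inf_of_hasOrthogonalProjection
          (inf_le_left : X.1 ⊓ Xj ≤ X.1)).symm
    · -- Compatible Xj Y
      refine ⟨X.1 ⊓ Xj, (Y.1 ⊓ Xj)ᗮ ⊓ Y.1, Y.1 ⊓ Xj, ?_, ?_, ?_, ?_, ?_⟩
      · exact hXY.mono inf_le_left inf_le_right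
      · exact hXY.mono inf_le_left inf_le_left
      · exact Submodule.isOrtho_iff_le.mpr inf_le_left
      · exact hsup.symm
      · rw [sup_comm]
        exact (Submodule.sup_orthogonal_inf_of_hasOrthogonalProjection
          (inf_le_left : Y.1 ⊓ Xj ≤ Y.1)).symm
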